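/- arXiv:1808.08494 — 9 statements merged into one kernel-verified Lean document; each statement's English description precedes it below -/
import Mathlib

section
/- Let G be a connected undirected graph and S, T nonempty sets of vertices, with D_{S,T} = max_{s∈S, t∈T} d(s,t). For any fixed s ∈ S and t ∈ T, max{ max_{t'∈T} d(s,t'), max_{s'∈S} d(s',t) } ≥ D_{S,T}/3. -/
open Finset

/-- For a connected undirected graph `G` and nonempty vertex sets `S`, `T`, with
`D_{S,T} = max_{s∈S,t∈T} d(s,t)`: for any fixed `s ∈ S` and `t ∈ T`,
`max{max_{t'∈T} d(s,t'), max_{s'∈S} d(s',t)} ≥ D_{S,T}/3`. -/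
theorem stmt_1 {V : Type*} [Fintype V] [DecidableEq V] (G : SimpleGraph V)
    (hconn : G.Connected) (S T : Finset V) (hS : S.Nonempty) (hT : T.Nonempty)
    (s : V) (hs : s ∈ S) (t : V) (ht : t ∈ T) :
    (((S ×ˢ T).sup fun p => G.dist p.1 p.2 : ℕ) : ℚ) / 3 ≤
      max ((T.sup fun t' => G.dist s t' : ℕ) : ℚ)
          ((S.sup fun s' => G.dist s' t : ℕ) : ℚ) := by
  have key : ((S ×ˢ T).sup fun p => G.dist p.1 p.2) ≤
      3 * max (T.sup fun t' => G.dist s t') (S.sup fun s' => G.dist s' t) := by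
    apply Finset.sup_le
    rintro ⟨s0, t0⟩ hp
    rw [Finset.mem_product] at hp
    have h1 : G.dist s0 t0 ≤ G.dist s0 t + G.dist t s + G.dist s t0 := by
      calc G.dist s0 t0 ≤ G.dist s0 t + G.dist t t0 := hconn.dist_triangle
        _ ≤ G.dist s0 t + (G.dist t s + G.dist s t0) := by
            exact Nat.add_le_add_left hconn.dist_triangle _
        _ = G.dist s0 t + G.dist t s + G.dist s t0 := by ring
    have hA : G.dist s t0 ≤ T.sup fun t' => G.dist s t' := Finset.le_sup hp.2
    have hA' : G.dist t s ≤ T.sup fun t' => G.dist s t' := by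
      rw [G.dist_comm]; exact Finset.le_sup ht
    have hB : G.dist s0 t ≤ S.sup fun s' => G.dist s' t := Finset.le_sup (f := fun s' => G.dist s' t) hp.1
    have := le_trans h1 (Nat.add_le_add (Nat.add_le_add hB hA') hA)
    calc G.dist s0 t0 ≤ (S.sup fun s' => G.dist s' t) +
          (T.sup fun t' => G.dist s t') + (T.sup fun t' => G.dist s t') := this
      _ ≤ 3 * max (T.sup fun t' => G.dist s t') (S.sup fun s' => G.dist s' t) := by
          have h2 := le_max_left (T.sup fun t' => G.dist s t') (S.sup fun s' => G.dist s' t)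
          have h3 := le_max_right (T.sup fun t' => G.dist s t') (S.sup fun s' => G.dist s' t)
          omega
  rw [div_le_iff₀ (by norm_num : (0:ℚ) < 3)]
  have : (((S ×ˢ T).sup fun p => G.dist p.1 p.2 : ℕ) : ℚ) ≤
      ((3 * max (T.sup fun t' => G.dist s t') (S.sup fun s' => G.dist s' t) : ℕ) : ℚ) := by
    exact_mod_cast key
  push_cast at this
  linarith [this]
end

section
/- Let G be a strongly connected directed unweighted graph with diameter D = 2h. Let v be any vertex, and suppose we know the in- and out-eccentricities of v and of every in- and out-neighbor of v. Then max over w ∈ N(v) ∪ {v} of max(ε_in(w), ε_out(w)) is at least h+1 and at most 2h. -/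
open Finset

/-- Shortest-path distance in a directed graph (quiver): the least length of a
directed path from `u` to `v`. -/
noncomputable def ddist {V : Type*} [Quiver V] (u v : V) : ℕ :=
  sInf {n | ∃ p : Quiver.Path u v, p.length = n}

lemma ddist_le_length {V : Type*} [Quiver V] {u v : V} (p : Quiver.Path u v) :
    ddist u v ≤ p.length := Nat.sInf_le ⟨p, rfl⟩

lemma exists_path_ddist {V : Type*} [Quiver V] {u v : V}
    (hne : Nonempty (Quiver.Path u v)) :
    ∃ p : Quiver.Path u v, p.length = ddist u v := by
  have : ∃ n, n ∈ {n | ∃ p : Quiver.Path u v, p.length = n} :=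
    ⟨hne.some.length, hne.some, rfl⟩
  exact Nat.sInf_mem this

lemma ddist_triangle {V : Type*} [Quiver V] {a c b : V}
    (h1 : Nonempty (Quiver.Path a c)) (h2 : Nonempty (Quiver.Path c b)) :
    ddist a b ≤ ddist a c + ddist c b := by
  obtain ⟨p, hp⟩ := exists_path_ddist h1
  obtain ⟨q, hq⟩ := exists_path_ddist h2
  calc ddist a b ≤ (p.comp q).length := ddist_le_length _
    _ = ddist a c + ddist c b := by rw [Quiver.Path.length_comp, hp, hq]

/-- In a strongly connected directed unweighted graph of diameter `D = 2h`,
for any vertex `v`, the maximum over `w ∈ N(v) ∪ {v}` of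
`max(ε_in(w), ε_out(w))` is at least `h+1` and at most `2h`. -/
theorem stmt_5 {V : Type*} [Fintype V] [Quiver V]
    (hsc : ∀ u v : V, Nonempty (Quiver.Path u v))
    (h : ℕ) (hh : 1 ≤ h)
    (hub : ∀ a b : V, ddist a b ≤ 2 * h)
    (hlb : ∃ a b : V, ddist a b = 2 * h)
    (v : V) :
    (∃ w : V, (w = v ∨ Nonempty (v ⟶ w) ∨ Nonempty (w ⟶ v)) ∧
        h + 1 ≤ max (univ.sup fun u => ddist u w) (univ.sup fun u => ddist w u)) ∧
    (∀ w : V, (w = v ∨ Nonempty (v ⟶ w) ∨ Nonempty (w ⟶ v)) →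
        max (univ.sup fun u => ddist u w) (univ.sup fun u => ddist w u) ≤ 2 * h) := by
  constructor
  · obtain ⟨a, b, hab⟩ := hlb
    have htri : 2 * h ≤ ddist a v + ddist v b := by
      rw [← hab]; exact ddist_triangle (hsc a v) (hsc v b)
    by_cases h1 : h + 1 ≤ ddist v b
    · exact ⟨v, Or.inl rfl,
        le_max_of_le_right (h1.trans (Finset.le_sup (f := fun u => ddist v u)
          (mem_univ b)))⟩
    by_cases h2 : h + 1 ≤ ddist a v
    · exact ⟨v, Or.inl rfl,
        le_max_of_le_left (h2.trans (Finset.le_sup (f := fun u => ddist u v)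
          (mem_univ a)))⟩
    · push_neg at h1 h2
      have hav1 : 1 ≤ ddist a v := by omega
      obtain ⟨p, hp⟩ := exists_path_ddist (hsc a v)
      cases p with
      | nil => simp at hp; omega
      | cons q e =>
        rename_i c
        refine ⟨c, Or.inr (Or.inr ⟨e⟩), ?_⟩
        have hac : ddist a c ≤ q.length := ddist_le_length q
        have hlen : q.length + 1 = ddist a v := by
          simpa [Quiver.Path.length_cons] using hp
        have htri2 : 2 * h ≤ ddist a c + ddist c b := by
          rw [← hab]; exact ddist_triangle (hsc a c) (hsc c b)
        have : h + 1 ≤ ddist c b := by omega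
        exact le_max_of_le_right (this.trans (Finset.le_sup
          (f := fun u => ddist c u) (mem_univ b)))
  · intro w _
    exact max_le (Finset.sup_le fun u _ => hub u w)
      (Finset.sup_le fun u _ => hub w u)
end

section
/- Let G be an undirected graph, A ⊆ V a nonempty set, and for each u define the bunch B_A(u) = {x : d(u,x) < d(u,A)} where d(u,A) = min_{a∈A} d(u,a). If u, v are vertices with B_A(u) ∩ B_A(v) ≠ ∅ and v ∉ B_A(u), then there exists a vertex w on some shortest path from u to v with w ∈ B_A(u) ∩ B_A(v). -/
lemma dist_getVert_le {V : Type*} (G : SimpleGraph V) (hconn : G.Connected)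
    {u v : V} (p : G.Walk u v) (i : ℕ) : G.dist u (p.getVert i) ≤ i := by
  induction p generalizing i with
  | nil => simp [SimpleGraph.Walk.getVert, SimpleGraph.dist_self]
  | cons h q ih =>
    cases i with
    | zero => simp [SimpleGraph.Walk.getVert]
    | succ n =>
      rw [SimpleGraph.Walk.getVert_cons_succ]
      calc G.dist _ _ ≤ G.dist _ _ + G.dist _ (q.getVert n) := hconn.dist_triangle
        _ ≤ 1 + n := by
            gcongr
            · exact le_trans (SimpleGraph.dist_le (SimpleGraph.Walk.cons h .nil)) (by simp)
            · exact ih n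
        _ = n + 1 := by omega

/-- Bunch intersection lemma: if `B_A(u) ∩ B_A(v) ≠ ∅` and `v ∉ B_A(u)`, then
some vertex `w` on a shortest path from `u` to `v` (i.e. with
`d(u,w) + d(w,v) = d(u,v)`) lies in `B_A(u) ∩ B_A(v)`. -/
theorem stmt_6 {V : Type*} (G : SimpleGraph V) (hconn : G.Connected)
    (A : Finset V) (hA : A.Nonempty) (u v : V)
    (hint : ∃ x : V, G.dist u x < A.inf' hA (fun a => G.dist u a) ∧
        G.dist v x < A.inf' hA (fun a => G.dist v a))
    (hv : ¬ G.dist u v < A.inf' hA (fun a => G.dist u a)) :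
    ∃ w : V, G.dist u w + G.dist w v = G.dist u v ∧
        G.dist u w < A.inf' hA (fun a => G.dist u a) ∧
        G.dist v w < A.inf' hA (fun a => G.dist v a) := by
  obtain ⟨x, hxu, hxv⟩ := hint
  obtain ⟨p, hp⟩ := hconn.exists_walk_length_eq_dist u v
  set i := G.dist u x with hi
  have hile : i ≤ p.length := by
    rw [hp]; omega
  set w := p.getVert i with hw
  have h1 : G.dist u w ≤ i := dist_getVert_le G hconn p i
  have h2 : G.dist w v ≤ p.length - i := by
    have hrev : p.reverse.getVert (p.length - i) = w := by
      rw [SimpleGraph.Walk.getVert_reverse]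
      congr 1
      omega
    have := dist_getVert_le G hconn p.reverse (p.length - i)
    rw [hrev] at this
    rw [SimpleGraph.dist_comm]
    exact this
  have htri : G.dist u v ≤ G.dist u w + G.dist w v := hconn.dist_triangle
  have hsum : G.dist u w + G.dist w v = G.dist u v := by omega
  have htri2 : G.dist u v ≤ G.dist u x + G.dist x v := hconn.dist_triangle
  refine ⟨w, hsum, lt_of_le_of_lt h1 hxu, ?_⟩
  have hc : G.dist x v = G.dist v x := SimpleGraph.dist_comm
  have : G.dist w v ≤ G.dist v x := by omega
  rw [SimpleGraph.dist_comm]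
  omega
end

section
/- Let G be a directed graph with nonnegative weights, and let S ⊆ V with w ∈ V maximizing d(S,w) := min_{s∈S} d(s,w). Let v be a vertex and suppose d(v,s) < ε(v)/2 for all s ∈ S, where ε(v) = max_u d(v,u). Then d(S,w) > ε(v)/2. -/
open Finset

/-- Directed weighted graphs: if `w` maximizes `d(S,·)` and `d(v,s) < ε(v)/2`
for all `s ∈ S`, then `d(S,w) > ε(v)/2`. -/
theorem stmt_10 {V : Type*} [Fintype V] [Nonempty V]
    (d : V → V → ℝ) (hd0 : ∀ x : V, d x x = 0) (hnn : ∀ x y : V, 0 ≤ d x y)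
    (htri : ∀ x y z : V, d x z ≤ d x y + d y z)
    (S : Finset V) (hS : S.Nonempty) (w : V)
    (hw : ∀ x : V, S.inf' hS (fun s => d s x) ≤ S.inf' hS (fun s => d s w))
    (v : V)
    (hv : ∀ s ∈ S, d v s < (univ.sup' univ_nonempty fun u => d v u) / 2) :
    (univ.sup' univ_nonempty fun u => d v u) / 2 < S.inf' hS fun s => d s w := by
  set ε := (univ.sup' univ_nonempty fun u => d v u) with hε
  obtain ⟨v', -, hv'⟩ := exists_mem_eq_sup' (univ_nonempty) (fun u => d v u)
  have key : ε / 2 < S.inf' hS (fun s => d s v') := by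
    rw [lt_inf'_iff]
    intro s hs
    have h1 := htri v s v'
    have h2 := hv s hs
    have : d v v' = ε := hv'.symm
    linarith
  exact lt_of_lt_of_le key (hw v')
end

section
/- Correctness of the 2-approximation step for eccentricities: let G be a strongly connected directed graph, S ⊆ V nonempty, w a vertex maximizing d(S,w), and S' a set of vertices containing all u with d(u,w) ≤ d(S,w) (e.g., S' contains every u with d(u,w) < d(S,w), plus w's closest in-neighborhood intersecting S). Then for every vertex v ∉ S', the value max(max_{s∈S} d(v,s), d(v,w)) is at least ε(v)/2, where ε(v) = max_u d(v,u). -/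
open Finset

/-- Correctness of the 2-approximation step for eccentricities: if `w`
maximizes `d(S,·)`, `S'` contains every `u` with `d(u,w) ≤ d(S,w)`, and
`v ∉ S'`, then `max(max_{s∈S} d(v,s), d(v,w)) ≥ ε(v)/2`. -/
theorem stmt_11 {V : Type*} [Fintype V] [Nonempty V]
    (d : V → V → ℝ) (hd0 : ∀ x : V, d x x = 0) (hnn : ∀ x y : V, 0 ≤ d x y)
    (htri : ∀ x y z : V, d x z ≤ d x y + d y z)
    (S : Finset V) (hS : S.Nonempty) (w : V)
    (hw : ∀ x : V, S.inf' hS (fun s => d s x) ≤ S.inf' hS (fun s => d s w))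
    (S' : Set V)
    (hS' : ∀ u : V, d u w ≤ S.inf' hS (fun s => d s w) → u ∈ S')
    (v : V) (hv : v ∉ S') :
    (univ.sup' univ_nonempty fun u => d v u) / 2 ≤
      max (S.sup' hS fun s => d v s) (d v w) := by
  have hvw : ¬ d v w ≤ S.inf' hS (fun s => d s w) := fun h => hv (hS' v h)
  push_neg at hvw
  rw [div_le_iff₀ (by norm_num : (0:ℝ) < 2)]
  apply Finset.sup'_le
  intro u _
  obtain ⟨s, hs, hsu⟩ := Finset.exists_mem_eq_inf' hS (fun s => d s u)
  have h1 : d s u ≤ S.inf' hS (fun s => d s w) := by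
    rw [← hsu]; exact hw u
  have h2 : d v u ≤ d v s + d s u := htri v s u
  have h3 : d v s ≤ max (S.sup' hS fun s => d v s) (d v w) :=
    le_max_of_le_left (Finset.le_sup' _ hs)
  have h4 : d s u ≤ d v w := h1.trans hvw.le
  have h5 : d v w ≤ max (S.sup' hS fun s => d v s) (d v w) := le_max_right _ _
  linarith
end

section
/- Case analysis in the eccentricity-reduction phase: Let G be a strongly connected directed weighted graph, S ⊆ V, A ⊆ S, D ≥ 0, 0 < τ < 1. Suppose every vertex x ∈ V has A ∩ S_x ≠ ∅, where S_x ⊆ S consists of the |S|/2 vertices of S closest to x under d(·,x). Let w maximize d(A,w). If there exists v ∈ S with ε(v) > (1−τ)D and max_{x∈A} d(v,x) ≤ ((1−τ)/2)·D, then d(S \ S_w, w) ≥ ((1−τ)/2)·D. -/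
open Finset

/-- Case analysis in the eccentricity-reduction phase: if every vertex `x` has
`A ∩ S_x ≠ ∅` where `S_x` is the closest half of `S` to `x`, `w` maximizes
`d(A,·)`, and there is `v ∈ S` with `ε(v) > (1−τ)D` and
`max_{x∈A} d(v,x) ≤ ((1−τ)/2)·D`, then `d(S \ S_w, w) ≥ ((1−τ)/2)·D`. -/
theorem stmt_12 {V : Type*} [Fintype V] [Nonempty V] [DecidableEq V]
    (d : V → V → ℝ) (hd0 : ∀ x : V, d x x = 0) (hnn : ∀ x y : V, 0 ≤ d x y)
    (htri : ∀ x y z : V, d x z ≤ d x y + d y z)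
    (S A : Finset V) (hA : A.Nonempty) (hAS : A ⊆ S)
    (Sx : V → Finset V) (hSxS : ∀ x : V, Sx x ⊆ S)
    (hcard : ∀ x : V, (Sx x).card = S.card / 2)
    (hhalf : ∀ x : V, ∀ a ∈ Sx x, ∀ b ∈ S \ Sx x, d a x ≤ d b x)
    (hhit : ∀ x : V, (A ∩ Sx x).Nonempty)
    (D τ : ℝ) (hD : 0 ≤ D) (hτ0 : 0 < τ) (hτ1 : τ < 1)
    (w : V)
    (hw : ∀ x : V, A.inf' hA (fun a => d a x) ≤ A.inf' hA (fun a => d a w))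
    (v : V) (hvS : v ∈ S)
    (hecc : (1 - τ) * D < univ.sup' univ_nonempty fun u => d v u)
    (hclose : ∀ x ∈ A, d v x ≤ (1 - τ) / 2 * D) :
    ∀ y ∈ S \ Sx w, (1 - τ) / 2 * D ≤ d y w := by
  intro y hy
  -- get v' with d v v' > (1-τ)D
  obtain ⟨v', -, hv'⟩ := exists_mem_eq_sup' univ_nonempty (fun u => d v u)
  have hdvv' : (1 - τ) * D < d v v' := by rw [← hv']; exact hecc
  -- lower bound on inf over A of d a v'
  have hinf : (1 - τ) / 2 * D ≤ A.inf' hA (fun a => d a v') := by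
    apply Finset.le_inf'
    intro a ha
    have h1 : d v v' ≤ d v a + d a v' := htri v a v'
    have h2 : d v a ≤ (1 - τ) / 2 * D := hclose a ha
    nlinarith [hdvv']
  have hinfw : (1 - τ) / 2 * D ≤ A.inf' hA (fun a => d a w) :=
    le_trans hinf (hw v')
  obtain ⟨a, haA⟩ := hhit w
  rw [Finset.mem_inter] at haA
  have haw : (1 - τ) / 2 * D ≤ d a w :=
    le_trans hinfw (Finset.inf'_le _ haA.1)
  exact le_trans haw (hhalf w a haA.2 y hy)
end

section
/- In the directed eccentricity lower bound graph, if vertex u ∈ U is not orthogonal to any v ∈ V (i.e., for every v there is a coordinate c with u[c]=v[c]=1), then the out-eccentricity of u is exactly L+2; if u is orthogonal to some v ∈ V, then the out-eccentricity of u is at least 2L+3. -/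
open scoped ENNReal

/-- `hasWalk E n a b`: there is a directed walk of length `n` from `a` to `b`
along the relation `E`. -/
def hasWalk {α : Type*} (E : α → α → Prop) : ℕ → α → α → Prop
  | 0, a, b => a = b
  | n + 1, a, b => ∃ c, E a c ∧ hasWalk E n c b

/-- Directed shortest-path distance (`⊤` if unreachable). -/
noncomputable def dedist {α : Type*} (E : α → α → Prop) (a b : α) : ℕ∞ :=
  ⨅ (n : ℕ) (_ : hasWalk E n a b), (n : ℕ∞)

/-- Vertices of the directed eccentricity lower-bound graph: a vertex for each
`u ∈ U`, a vertex for each coordinate `c ∈ [d]`, a path `v_0 → ⋯ → v_L` for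
each `v ∈ V`, and an extra path `x_1 → ⋯ → x_L`. -/
abbrev EccVert (d L : ℕ) (U V : Finset (Fin d → Bool)) : Type :=
  {u // u ∈ U} ⊕ Fin d ⊕ ({v // v ∈ V} × Fin (L + 1)) ⊕ Fin L

/-- Directed edges: `(u, x_1)` and `(x_L, u)` for all `u ∈ U`; `x_i → x_{i+1}`;
`(u, c)` when `u[c] = 1`; `(c, v_0)` when `v[c] = 1`; and `v_i → v_{i+1}`. -/
def EccEdge (d L : ℕ) (U V : Finset (Fin d → Bool)) :
    EccVert d L U V → EccVert d L U V → Prop := fun a b =>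
  match a, b with
  | .inl u, .inr (.inl c) => u.1 c = true
  | .inr (.inl c), .inr (.inr (.inl (v, i))) => v.1 c = true ∧ (i : ℕ) = 0
  | .inr (.inr (.inl (v, i))), .inr (.inr (.inl (v', j))) =>
      v = v' ∧ (j : ℕ) = (i : ℕ) + 1
  | .inl _, .inr (.inr (.inr x)) => (x : ℕ) = 0
  | .inr (.inr (.inr x)), .inr (.inr (.inr y)) => (y : ℕ) = (x : ℕ) + 1
  | .inr (.inr (.inr x)), .inl _ => (x : ℕ) = L - 1
  | _, _ => False

lemma hasWalk_trans {α : Type*} {E : α → α → Prop} :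
    ∀ {m n : ℕ} {a b c : α}, hasWalk E m a b → hasWalk E n b c → hasWalk E (m + n) a c := by
  intro m
  induction m with
  | zero => intro n a b c h1 h2; cases h1; simpa [Nat.zero_add] using h2
  | succ m ih =>
      intro n a b c h1 h2
      obtain ⟨x, hx, hw⟩ := h1
      rw [Nat.succ_add]
      exact ⟨x, hx, ih hw h2⟩

lemma walk_pot {α : Type*} {E : α → α → Prop} (φ : α → ℕ)
    (hφ : ∀ a b, E a b → φ b ≤ φ a + 1) :
    ∀ n a b, hasWalk E n a b → φ b ≤ φ a + n := by
  intro n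
  induction n with
  | zero => intro a b h; cases h; simp
  | succ n ih =>
      rintro a b ⟨c, hc, hw⟩
      have h1 := ih c b hw
      have h2 := hφ a c hc
      omega

lemma dedist_le_of_walk {α : Type*} {E : α → α → Prop} {a b : α} {n : ℕ}
    (h : hasWalk E n a b) : dedist E a b ≤ n := iInf₂_le n h

lemma le_dedist_of {α : Type*} {E : α → α → Prop} {a b : α} {m : ℕ}
    (h : ∀ n, hasWalk E n a b → m ≤ n) : (m : ℕ∞) ≤ dedist E a b :=
  le_iInf₂ fun n hn => Nat.cast_le.mpr (h n hn)

section
variable {d L : ℕ} {U V : Finset (Fin d → Bool)}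

lemma walk_x (u : {x // x ∈ U}) :
    ∀ (i : ℕ) (hi : i < L), hasWalk (EccEdge d L U V) (i + 1)
      (Sum.inl u) (Sum.inr (Sum.inr (Sum.inr ⟨i, hi⟩))) := by
  intro i
  induction i with
  | zero => intro hi; exact ⟨Sum.inr (Sum.inr (Sum.inr ⟨0, hi⟩)), rfl, rfl⟩
  | succ i ih =>
      intro hi
      have h1 := ih (Nat.lt_of_succ_lt hi)
      have h2 : hasWalk (EccEdge d L U V) 1
          (Sum.inr (Sum.inr (Sum.inr ⟨i, Nat.lt_of_succ_lt hi⟩)))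
          (Sum.inr (Sum.inr (Sum.inr ⟨i + 1, hi⟩))) :=
        ⟨Sum.inr (Sum.inr (Sum.inr ⟨i + 1, hi⟩)), rfl, rfl⟩
      exact hasWalk_trans h1 h2

lemma walk_uu (hL : 1 ≤ L) (u u' : {x // x ∈ U}) :
    hasWalk (EccEdge d L U V) (L + 1) (Sum.inl u) (Sum.inl u') := by
  have hlt : L - 1 < L := Nat.sub_lt (Nat.lt_of_lt_of_le Nat.one_pos hL) Nat.one_pos
  have h1 := walk_x (V := V) u (L - 1) hlt
  have he : L - 1 + 1 = L := by omega
  rw [he] at h1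
  have h2 : hasWalk (EccEdge d L U V) 1
      (Sum.inr (Sum.inr (Sum.inr ⟨L - 1, hlt⟩))) (Sum.inl u') :=
    ⟨Sum.inl u', rfl, rfl⟩
  exact hasWalk_trans h1 h2

lemma walk_v (v : {x // x ∈ V}) :
    ∀ (i : ℕ) (hi : i < L + 1), hasWalk (EccEdge d L U V) i
      (Sum.inr (Sum.inr (Sum.inl (v, ⟨0, Nat.succ_pos L⟩))))
      (Sum.inr (Sum.inr (Sum.inl (v, ⟨i, hi⟩)))) := by
  intro i
  induction i with
  | zero => intro hi; rfl
  | succ i ih =>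
      intro hi
      have h2 : hasWalk (EccEdge d L U V) 1
          (Sum.inr (Sum.inr (Sum.inl (v, ⟨i, Nat.lt_of_succ_lt hi⟩))))
          (Sum.inr (Sum.inr (Sum.inl (v, ⟨i + 1, hi⟩)))) :=
        ⟨Sum.inr (Sum.inr (Sum.inl (v, ⟨i + 1, hi⟩))), ⟨rfl, rfl⟩, rfl⟩
      exact hasWalk_trans (ih (Nat.lt_of_succ_lt hi)) h2

def pot1 : EccVert d L U V → ℕ
  | Sum.inl _ => 0
  | Sum.inr (Sum.inl _) => 1
  | Sum.inr (Sum.inr (Sum.inl (_, i))) => 2 + (i : ℕ)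
  | Sum.inr (Sum.inr (Sum.inr _)) => 0

lemma pot1_edge : ∀ a b, EccEdge d L U V a b → pot1 b ≤ pot1 a + 1 := by
  rintro (u | c | ⟨v, i⟩ | x) (u' | c' | ⟨v', j⟩ | x') h <;>
    simp only [EccEdge, pot1] at h ⊢ <;> omega

def pot2 (u0 v0 : Fin d → Bool) : EccVert d L U V → ℕ
  | Sum.inl u' => if u'.1 = u0 then 0 else L + 1
  | Sum.inr (Sum.inl c) => if u0 c = true then 1 else L + 2
  | Sum.inr (Sum.inr (Sum.inl (v', i))) => if v'.1 = v0 then L + 3 + (i : ℕ) else 0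
  | Sum.inr (Sum.inr (Sum.inr x)) => (x : ℕ) + 1

lemma pot2_edge (u0 v0 : Fin d → Bool)
    (horth : ∀ c : Fin d, ¬(u0 c = true ∧ v0 c = true)) :
    ∀ a b, EccEdge d L U V a b → pot2 u0 v0 b ≤ pot2 u0 v0 a + 1 := by
  rintro (u | c | ⟨v, i⟩ | x) (u' | c' | ⟨v', j⟩ | x') h <;>
    simp only [EccEdge, pot2] at h ⊢
  · -- u → c'
    rcases eq_or_ne u.1 u0 with he | he
    · have hc : u0 c' = true := he ▸ h
      simp [he, hc]
    · simp only [he, if_neg, if_false]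
      split_ifs <;> omega
  · -- u → x'
    split_ifs <;> omega
  · -- c → (v', j)
    rcases eq_or_ne v'.1 v0 with he | he
    · obtain ⟨h1, h2⟩ := h
      have hc : v0 c = true := he ▸ h1
      have hu : ¬ u0 c = true := fun hx => horth c ⟨hx, hc⟩
      simp only [he, if_pos rfl, if_neg hu, if_true, eq_self_iff_true]
      omega
    · simp only [if_neg he]
      split_ifs <;> omega
  · -- (v,i) → (v',j)
    obtain ⟨rfl, hj⟩ := h
    split_ifs <;> omega
  · -- x → u'
    split_ifs <;> omega
  · -- x → x'
    omega

end

/-- In the directed eccentricity lower-bound graph: if `u ∈ U` is not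
orthogonal to any `v ∈ V` then the out-eccentricity of `u` is exactly `L + 2`;
if `u` is orthogonal to some `v ∈ V` then it is at least `2L + 3`. -/
theorem stmt_15 (d L : ℕ) (hL : 1 ≤ L)
    (U V : Finset (Fin d → Bool)) (hU : U.Nonempty) (hV : V.Nonempty)
    (hcoord : ∀ c : Fin d, ∃ u ∈ U, u c = true)
    (hVreach : ∀ v ∈ V, ∃ u ∈ U, ∃ c : Fin d, u c = true ∧ v c = true)
    (u : {x // x ∈ U}) :
    ((∀ v ∈ V, ∃ c : Fin d, u.1 c = true ∧ v c = true) →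
        (⨆ w : EccVert d L U V, dedist (EccEdge d L U V) (Sum.inl u) w) =
          ((L + 2 : ℕ) : ℕ∞)) ∧
    ((∃ v ∈ V, ∀ c : Fin d, ¬(u.1 c = true ∧ v c = true)) →
        ((2 * L + 3 : ℕ) : ℕ∞) ≤
          ⨆ w : EccVert d L U V, dedist (EccEdge d L U V) (Sum.inl u) w) := by
  constructor
  · intro hnon
    apply le_antisymm
    · apply iSup_le
      rintro (u' | c | ⟨v, i⟩ | x)
      · exact le_trans (dedist_le_of_walk (walk_uu hL u u'))
          (Nat.cast_le.mpr (by omega))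
      · obtain ⟨u', hu', huc⟩ := hcoord c
        have hw1 : hasWalk (EccEdge d L U V) (L + 1) (Sum.inl u) (Sum.inl ⟨u', hu'⟩) :=
          walk_uu hL u ⟨u', hu'⟩
        have hw2 : hasWalk (EccEdge d L U V) 1 (Sum.inl (⟨u', hu'⟩ : {x // x ∈ U}))
            (Sum.inr (Sum.inl c)) :=
          ⟨Sum.inr (Sum.inl c), huc, rfl⟩
        exact le_trans (dedist_le_of_walk (hasWalk_trans hw1 hw2))
          (Nat.cast_le.mpr (by omega))
      · obtain ⟨c, huc, hvc⟩ := hnon v.1 v.2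
        have hw1 : hasWalk (EccEdge d L U V) 1 (Sum.inl u) (Sum.inr (Sum.inl c)) :=
          ⟨Sum.inr (Sum.inl c), huc, rfl⟩
        have hw2 : hasWalk (EccEdge d L U V) 1 (Sum.inr (Sum.inl c))
            (Sum.inr (Sum.inr (Sum.inl (v, ⟨0, Nat.succ_pos L⟩)))) :=
          ⟨Sum.inr (Sum.inr (Sum.inl (v, ⟨0, Nat.succ_pos L⟩))), ⟨hvc, rfl⟩, rfl⟩
        have hw3 := walk_v (U := U) v i.1 i.2
        have hw := hasWalk_trans hw1 (hasWalk_trans hw2 hw3)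
        have heq : (Sum.inr (Sum.inr (Sum.inl (v, (⟨i.1, i.2⟩ : Fin (L + 1))))) :
            EccVert d L U V) = Sum.inr (Sum.inr (Sum.inl (v, i))) := by simp
        rw [heq] at hw
        refine le_trans (dedist_le_of_walk hw) (Nat.cast_le.mpr ?_)
        have := i.2
        omega
      · have hw := walk_x (V := V) u x.1 x.2
        have heq : (Sum.inr (Sum.inr (Sum.inr (⟨x.1, x.2⟩ : Fin L))) :
            EccVert d L U V) = Sum.inr (Sum.inr (Sum.inr x)) := by simp
        rw [heq] at hw
        refine le_trans (dedist_le_of_walk hw) (Nat.cast_le.mpr ?_)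
        have := x.2
        omega
    · obtain ⟨v0, hv0⟩ := hV
      refine le_trans ?_ (le_iSup (fun w => dedist (EccEdge d L U V) (Sum.inl u) w)
        (Sum.inr (Sum.inr (Sum.inl (⟨v0, hv0⟩, ⟨L, by omega⟩)))))
      apply le_dedist_of
      intro n hn
      have := walk_pot pot1 pot1_edge n _ _ hn
      simp only [pot1] at this
      omega
  · rintro ⟨v0, hv0, horth⟩
    refine le_trans ?_ (le_iSup (fun w => dedist (EccEdge d L U V) (Sum.inl u) w)
      (Sum.inr (Sum.inr (Sum.inl (⟨v0, hv0⟩, ⟨L, by omega⟩)))))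
    apply le_dedist_of
    intro n hn
    have := walk_pot (pot2 u.1 v0) (pot2_edge u.1 v0 horth) n _ _ hn
    simp [pot2] at this
    omega
end

section
/- In the S-T diameter lower-bound graph built from a k-OV instance, consider the middle-layer claim: for every coordinate tuple x̄ = (x_0,...,x_t), every vertex (a_0,...,a_{t−1}, x̄) ∈ L_1 is at distance exactly t from every vertex (b_2,...,b_{t+1}, x̄) ∈ L_{t+1} (sharing the same x̄), via the canonical forgetting path through L_2,...,L_t. -/
/-- A vertex of one of the middle layers `L_1, …, L_{t+1}` of the `k`-OV
(`k = t+2`) lower-bound graph: a layer index `i` with `1 ≤ i ≤ t+1`, a vector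
from `W j` for each index `j` present in layer `i` (namely `j ≤ t−i`, the
"a-side", or `j ≥ t+3−i`, the "b-side"), and a coordinate tuple
`x̄ ∈ [d]^{t+1}`. -/
structure MidVert (t d : ℕ) (W : Fin (t + 2) → Finset (Fin d → Bool)) where
  i : ℕ
  hi1 : 1 ≤ i
  hi2 : i ≤ t + 1
  f : ∀ j : Fin (t + 2), ((j : ℕ) + i ≤ t ∨ t + 3 ≤ (j : ℕ) + i) → {w // w ∈ W j}
  x : Fin (t + 1) → Fin d

/-- The "forget and replace" relation between consecutive middle layers: a
vertex of layer `i` is joined to a vertex of layer `i+1` with the same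
coordinate tuple `x̄` that agrees with it on every index present in both. -/
def midRel (t d : ℕ) (W : Fin (t + 2) → Finset (Fin d → Bool)) :
    MidVert t d W → MidVert t d W → Prop := fun p q =>
  q.i = p.i + 1 ∧ q.x = p.x ∧
    ∀ (j : Fin (t + 2)) (h1 : (j : ℕ) + p.i ≤ t ∨ t + 3 ≤ (j : ℕ) + p.i)
      (h2 : (j : ℕ) + q.i ≤ t ∨ t + 3 ≤ (j : ℕ) + q.i), p.f j h1 = q.f j h2

lemma MidVert.ext' {t d : ℕ} {W : Fin (t + 2) → Finset (Fin d → Bool)}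
    {p q : MidVert t d W} (hi : p.i = q.i) (hx : p.x = q.x)
    (hf : ∀ (j : Fin (t + 2)) (h1 : (j : ℕ) + p.i ≤ t ∨ t + 3 ≤ (j : ℕ) + p.i)
      (h2 : (j : ℕ) + q.i ≤ t ∨ t + 3 ≤ (j : ℕ) + q.i), p.f j h1 = q.f j h2) :
    p = q := by
  cases p with
  | mk pi ph1 ph2 pf px =>
    cases q with
    | mk qi qh1 qh2 qf qx =>
      dsimp at hi hx hf
      subst hi; subst hx
      congr 1
      funext j h
      exact hf j h h

/-- The canonical path vertex at layer `m+1`. -/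
def pVert (t d : ℕ) (W : Fin (t + 2) → Finset (Fin d → Bool))
    (u v : MidVert t d W) (hu : u.i = 1) (hv : v.i = t + 1)
    (m : ℕ) (hm : m ≤ t) : MidVert t d W where
  i := m + 1
  hi1 := Nat.le_add_left 1 m
  hi2 := Nat.succ_le_succ hm
  f := fun j h =>
    if hc : (j : ℕ) + (m + 1) ≤ t then
      u.f j (Or.inl (by omega))
    else
      v.f j (Or.inr (by have h' := h.resolve_left hc; omega))
  x := u.x

lemma pVert_rel (t d : ℕ) (W : Fin (t + 2) → Finset (Fin d → Bool))
    (u v : MidVert t d W) (hu : u.i = 1) (hv : v.i = t + 1)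
    (m : ℕ) (hm : m < t) :
    midRel t d W (pVert t d W u v hu hv m hm.le)
      (pVert t d W u v hu hv (m + 1) hm) := by
  refine ⟨rfl, rfl, ?_⟩
  intro j h1 h2
  dsimp only [pVert] at h1 h2 ⊢
  split_ifs with hc1 hc2 hc2
  · rfl
  · exact absurd (h2.resolve_left hc2) (by omega)
  · exact absurd (h1.resolve_left hc1) (by omega)
  · rfl

lemma pVert_adj (t d : ℕ) (W : Fin (t + 2) → Finset (Fin d → Bool))
    (u v : MidVert t d W) (hu : u.i = 1) (hv : v.i = t + 1)
    (m : ℕ) (hm : m < t) :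
    (SimpleGraph.fromRel (midRel t d W)).Adj (pVert t d W u v hu hv m hm.le)
      (pVert t d W u v hu hv (m + 1) hm) := by
  rw [SimpleGraph.fromRel_adj]
  refine ⟨?_, Or.inl (pVert_rel t d W u v hu hv m hm)⟩
  intro h
  have := congrArg MidVert.i h
  simp [pVert] at this

lemma pVert_walk (t d : ℕ) (W : Fin (t + 2) → Finset (Fin d → Bool))
    (u v : MidVert t d W) (hu : u.i = 1) (hv : v.i = t + 1) :
    ∀ (n m : ℕ) (hm : m ≤ t), n = t - m →
    ∃ w : (SimpleGraph.fromRel (midRel t d W)).Walk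
      (pVert t d W u v hu hv m hm) (pVert t d W u v hu hv t le_rfl),
      w.length = t - m := by
  intro n
  induction n with
  | zero =>
    intro m hm hn
    have : m = t := by omega
    subst this
    exact ⟨SimpleGraph.Walk.nil, by simp⟩
  | succ k ih =>
    intro m hm hn
    have hmt : m < t := by omega
    obtain ⟨w, hw⟩ := ih (m + 1) hmt (by omega)
    exact ⟨SimpleGraph.Walk.cons (pVert_adj t d W u v hu hv m hmt) w, by
      simp [hw]; omega⟩

lemma walk_layer_bound (t d : ℕ) (W : Fin (t + 2) → Finset (Fin d → Bool)) :
    ∀ {p q : MidVert t d W}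
      (w : (SimpleGraph.fromRel (midRel t d W)).Walk p q),
      q.i ≤ p.i + w.length := by
  intro p q w
  induction w with
  | nil => simp
  | cons h w ih =>
    rename_i a b c
    rw [SimpleGraph.fromRel_adj] at h
    have hb : b.i ≤ a.i + 1 := by
      rcases h.2 with h' | h'
      · have := h'.1; omega
      · have := h'.1; omega
    simp only [SimpleGraph.Walk.length_cons]
    omega

/-- Middle-layer claim: every vertex of `L_1` is at distance exactly `t` from
every vertex of `L_{t+1}` sharing the same coordinate tuple `x̄`, via the
canonical forgetting path through `L_2, …, L_t`. -/
theorem stmt_16 (t d : ℕ) (W : Fin (t + 2) → Finset (Fin d → Bool))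
    (u v : MidVert t d W) (hu : u.i = 1) (hv : v.i = t + 1) (hx : u.x = v.x) :
    (SimpleGraph.fromRel (midRel t d W)).dist u v = t := by
  have hu0 : u = pVert t d W u v hu hv 0 (Nat.zero_le t) := by
    apply MidVert.ext'
    · exact hu
    · rfl
    · intro j h1 h2
      simp only [pVert]
      split_ifs with hc
      · congr 1
      · exact absurd (h2.resolve_left hc) (by have := j.isLt; omega)
  have hvt : v = pVert t d W u v hu hv t le_rfl := by
    apply MidVert.ext'
    · exact hv
    · exact hx.symm
    · intro j h1 h2
      simp only [pVert]
      split_ifs with hc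
      · exact absurd hc (by omega)
      · congr 1
  obtain ⟨w, hw⟩ := pVert_walk t d W u v hu hv t 0 (Nat.zero_le t) (by omega)
  have hle : (SimpleGraph.fromRel (midRel t d W)).dist u v ≤ t := by
    have := SimpleGraph.dist_le (w.copy hu0.symm hvt.symm)
    rw [SimpleGraph.Walk.length_copy] at this
    omega
  have hreach : (SimpleGraph.fromRel (midRel t d W)).Reachable u v :=
    ⟨w.copy hu0.symm hvt.symm⟩
  obtain ⟨w', hw'⟩ := hreach.exists_walk_length_eq_dist
  have := walk_layer_bound t d W w'
  omega
end

section
/- In the equivalence reduction from S-T Diameter to Diameter: if G' is obtained from graph G by adding, for each s_i ∈ S, a pendant vertex v_i connected to s_i by an edge of weight W where W > M·n exceeds the maximum possible distance in G, then the diameter of the resulting graph equals 2W + max_{s_i, s_j ∈ S} d_G(s_i, s_j). -/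
open scoped ENNReal

/-- Cost of a walk `a :: l` in a weighted graph with weight function `w`
(where `w a b = ⊤` means no edge). -/
noncomputable def walkCost {α : Type*} (w : α → α → ℕ∞) : α → List α → ℕ∞
  | _, [] => 0
  | a, b :: l => w a b + walkCost w b l

/-- Shortest-path distance in a weighted graph given by the weight function
`w` (`⊤` if unreachable). -/
noncomputable def ewdist {α : Type*} (w : α → α → ℕ∞) (u v : α) : ℕ∞ :=
  ⨅ (l : List α) (_ : l.getLastD u = v), walkCost w u l

/-- The augmented graph `G_S`: for each `i`, a pendant vertex `v_i` joined to
`s i` by an edge of weight `Wt`; all other new pairs are non-adjacent. -/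
noncomputable def wS {V : Type*} [DecidableEq V] (wG : V → V → ℕ∞) {k : ℕ}
    (s : Fin k → V) (Wt : ℕ) : (V ⊕ Fin k) → (V ⊕ Fin k) → ℕ∞ := fun a b =>
  match a, b with
  | .inl a, .inl b => wG a b
  | .inl a, .inr i => if a = s i then (Wt : ℕ∞) else ⊤
  | .inr i, .inl a => if a = s i then (Wt : ℕ∞) else ⊤
  | .inr _, .inr _ => ⊤

namespace StmtAux

variable {α : Type*} (w : α → α → ℕ∞)

lemma walkCost_nil (a : α) : walkCost w a [] = 0 := rfl

lemma walkCost_cons (a b : α) (l : List α) :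
    walkCost w a (b :: l) = w a b + walkCost w b l := rfl

lemma getLastD_append (l₁ l₂ : List α) (a : α) :
    (l₁ ++ l₂).getLastD a = l₂.getLastD (l₁.getLastD a) := by
  induction l₁ generalizing a with
  | nil => rfl
  | cons b l ih => rw [List.cons_append, List.getLastD_cons, List.getLastD_cons, ih]

lemma walkCost_append (l₁ l₂ : List α) (a : α) :
    walkCost w a (l₁ ++ l₂) = walkCost w a l₁ + walkCost w (l₁.getLastD a) l₂ := by
  induction l₁ generalizing a with
  | nil => simp [walkCost]
  | cons b l ih =>
    rw [List.cons_append, walkCost_cons, walkCost_cons, ih b, List.getLastD_cons, add_assoc]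

lemma ewdist_le_walkCost (u v : α) (l : List α) (h : l.getLastD u = v) :
    ewdist w u v ≤ walkCost w u l :=
  iInf_le_of_le l (iInf_le _ h)

lemma ewdist_self (u : α) : ewdist w u u = 0 :=
  le_antisymm (ewdist_le_walkCost w u u [] rfl) (zero_le)

lemma exists_walk (u v : α) :
    ∃ l : List α, l.getLastD u = v ∧ walkCost w u l = ewdist w u v := by
  have hne : ({c : ℕ∞ | ∃ l : List α, l.getLastD u = v ∧ walkCost w u l = c}).Nonempty :=
    ⟨walkCost w u [v], [v], by simp [List.getLastD_cons], rfl⟩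
  obtain ⟨m, ⟨l, hl, hc⟩, hmin⟩ := wellFounded_lt.has_min _ hne
  refine ⟨l, hl, ?_⟩
  rw [hc]
  refine le_antisymm ?_ (hc ▸ ewdist_le_walkCost w u v l hl)
  exact le_iInf fun l' => le_iInf fun hl' => not_lt.1 (hmin _ ⟨l', hl', rfl⟩)

lemma ewdist_le_edge_add (u b v : α) : ewdist w u v ≤ w u b + ewdist w b v := by
  obtain ⟨l, hl, hc⟩ := exists_walk w b v
  have := ewdist_le_walkCost w u v (b :: l) (by rw [List.getLastD_cons]; exact hl)
  rwa [walkCost_cons, hc] at this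

lemma ewdist_le_add_edge (u x v : α) : ewdist w u v ≤ ewdist w u x + w x v := by
  obtain ⟨l, hl, hc⟩ := exists_walk w u x
  have := ewdist_le_walkCost w u v (l ++ [v])
    (by rw [getLastD_append, hl, List.getLastD_cons]; rfl)
  rwa [walkCost_append, hl, hc, walkCost_cons, walkCost_nil, add_zero] at this

end StmtAux
namespace StmtAux

variable {V : Type*} [DecidableEq V] (wG : V → V → ℕ∞) {k : ℕ} (s : Fin k → V) (Wt : ℕ)

/-- Intended value of distances in the augmented graph. -/
noncomputable def fTarget : (V ⊕ Fin k) → (V ⊕ Fin k) → ℕ∞ := fun a b =>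
  match a, b with
  | .inl u, .inl v => ewdist wG u v
  | .inl u, .inr i => (Wt : ℕ∞) + ewdist wG u (s i)
  | .inr i, .inl v => (Wt : ℕ∞) + ewdist wG (s i) v
  | .inr i, .inr j => if i = j then 0 else 2 * (Wt : ℕ∞) + ewdist wG (s i) (s j)

lemma key (a b c : V ⊕ Fin k) :
    fTarget wG s Wt a c ≤ wS wG s Wt a b + fTarget wG s Wt b c := by
  obtain a | i := a <;> obtain b | j := b <;> obtain c | m := c
  · exact ewdist_le_edge_add wG a b c
  · show (Wt : ℕ∞) + ewdist wG a (s m) ≤ wG a b + ((Wt : ℕ∞) + ewdist wG b (s m))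
    rw [add_left_comm]
    exact add_le_add_right (ewdist_le_edge_add wG a b (s m)) _
  · show ewdist wG a c ≤ (if a = s j then (Wt : ℕ∞) else ⊤) + ((Wt : ℕ∞) + ewdist wG (s j) c)
    split
    · next h =>
      rw [h]
      exact le_add_self.trans (add_le_add_right le_add_self _)
    · simp
  · show (Wt : ℕ∞) + ewdist wG a (s m) ≤
      (if a = s j then (Wt : ℕ∞) else ⊤) + (if j = m then 0 else 2 * (Wt : ℕ∞) + ewdist wG (s j) (s m))
    split
    · next h =>
      subst h
      split
      · next h2 => subst h2; rw [ewdist_self, add_zero]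
      · refine add_le_add_right ?_ _
        exact le_add_self
    · simp
  · show (Wt : ℕ∞) + ewdist wG (s i) c ≤ (if b = s i then (Wt : ℕ∞) else ⊤) + ewdist wG b c
    split
    · next h => rw [h]
    · simp
  · show (if i = m then 0 else 2 * (Wt : ℕ∞) + ewdist wG (s i) (s m)) ≤
      (if b = s i then (Wt : ℕ∞) else ⊤) + ((Wt : ℕ∞) + ewdist wG b (s m))
    split
    · exact zero_le
    · next h =>
      split
      · next h2 => rw [h2, ← add_assoc, two_mul]
      · simp
  · show _ ≤ (⊤ : ℕ∞) + _
    simp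
  · show _ ≤ (⊤ : ℕ∞) + _
    simp

lemma cost_ge (l : List (V ⊕ Fin k)) :
    ∀ a, fTarget wG s Wt a (l.getLastD a) ≤ walkCost (wS wG s Wt) a l := by
  induction l with
  | nil =>
    intro a
    obtain u | i := a
    · show ewdist wG u u ≤ 0
      rw [ewdist_self]
    · show (if i = i then 0 else _) ≤ (0 : ℕ∞)
      simp
  | cons b l ih =>
    intro a
    rw [List.getLastD_cons, walkCost_cons]
    calc fTarget wG s Wt a (l.getLastD b)
        ≤ wS wG s Wt a b + fTarget wG s Wt b (l.getLastD b) := key wG s Wt a b _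
      _ ≤ wS wG s Wt a b + walkCost (wS wG s Wt) b l := add_le_add_right (ih b) _

lemma walkCost_map (l : List V) (u : V) :
    walkCost (wS wG s Wt) (Sum.inl u) (l.map Sum.inl) = walkCost wG u l := by
  induction l generalizing u with
  | nil => rfl
  | cons b l ih =>
    rw [List.map_cons, walkCost_cons, walkCost_cons, ih]
    rfl

lemma getLastD_map (l : List V) (u : V) :
    (l.map Sum.inl).getLastD (Sum.inl u : V ⊕ Fin k) = Sum.inl (l.getLastD u) := by
  induction l generalizing u with
  | nil => rfl
  | cons b l ih => rw [List.map_cons, List.getLastD_cons, List.getLastD_cons, ih]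

lemma ewdist_inl_inl_le (u v : V) :
    ewdist (wS wG s Wt) (Sum.inl u) (Sum.inl v) ≤ ewdist wG u v := by
  obtain ⟨l, hl, hc⟩ := exists_walk wG u v
  have := ewdist_le_walkCost (wS wG s Wt) (Sum.inl u) (Sum.inl v) (l.map Sum.inl)
    (by rw [getLastD_map, hl])
  rwa [walkCost_map, hc] at this

lemma wS_edge (i : Fin k) : wS wG s Wt (Sum.inl (s i)) (Sum.inr i) = (Wt : ℕ∞) := by
  simp [wS]

lemma wS_edge' (i : Fin k) : wS wG s Wt (Sum.inr i) (Sum.inl (s i)) = (Wt : ℕ∞) := by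
  simp [wS]

lemma ewdist_wS_eq (a b : V ⊕ Fin k) :
    ewdist (wS wG s Wt) a b = fTarget wG s Wt a b := by
  refine le_antisymm ?_ ?_
  · obtain u | i := a <;> obtain v | j := b
    · exact ewdist_inl_inl_le wG s Wt u v
    · show _ ≤ (Wt : ℕ∞) + ewdist wG u (s j)
      calc ewdist (wS wG s Wt) (Sum.inl u) (Sum.inr j)
          ≤ ewdist (wS wG s Wt) (Sum.inl u) (Sum.inl (s j)) + wS wG s Wt (Sum.inl (s j)) (Sum.inr j) :=
            ewdist_le_add_edge _ _ _ _
        _ ≤ ewdist wG u (s j) + (Wt : ℕ∞) := by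
            rw [wS_edge]; exact add_le_add_left (ewdist_inl_inl_le wG s Wt u (s j)) _
        _ = (Wt : ℕ∞) + ewdist wG u (s j) := add_comm _ _
    · show _ ≤ (Wt : ℕ∞) + ewdist wG (s i) v
      calc ewdist (wS wG s Wt) (Sum.inr i) (Sum.inl v)
          ≤ wS wG s Wt (Sum.inr i) (Sum.inl (s i)) + ewdist (wS wG s Wt) (Sum.inl (s i)) (Sum.inl v) :=
            ewdist_le_edge_add _ _ _ _
        _ ≤ (Wt : ℕ∞) + ewdist wG (s i) v := by
            rw [wS_edge']; exact add_le_add_right (ewdist_inl_inl_le wG s Wt (s i) v) _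
    · show _ ≤ if i = j then 0 else 2 * (Wt : ℕ∞) + ewdist wG (s i) (s j)
      split
      · next h => subst h; rw [ewdist_self]
      · calc ewdist (wS wG s Wt) (Sum.inr i) (Sum.inr j)
            ≤ wS wG s Wt (Sum.inr i) (Sum.inl (s i)) + ewdist (wS wG s Wt) (Sum.inl (s i)) (Sum.inr j) :=
              ewdist_le_edge_add _ _ _ _
          _ ≤ (Wt : ℕ∞) + ((Wt : ℕ∞) + ewdist wG (s i) (s j)) := by
              rw [wS_edge']
              refine add_le_add_right ?_ _
              calc ewdist (wS wG s Wt) (Sum.inl (s i)) (Sum.inr j)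
                  ≤ ewdist (wS wG s Wt) (Sum.inl (s i)) (Sum.inl (s j)) + wS wG s Wt (Sum.inl (s j)) (Sum.inr j) :=
                    ewdist_le_add_edge _ _ _ _
                _ ≤ ewdist wG (s i) (s j) + (Wt : ℕ∞) := by
                    rw [wS_edge]; exact add_le_add_left (ewdist_inl_inl_le wG s Wt _ _) _
                _ = (Wt : ℕ∞) + ewdist wG (s i) (s j) := add_comm _ _
          _ = 2 * (Wt : ℕ∞) + ewdist wG (s i) (s j) := by rw [← add_assoc, two_mul]
  · obtain ⟨l, hl, hc⟩ := exists_walk (wS wG s Wt) a b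
    rw [← hc, ← hl]
    exact cost_ge wG s Wt l a

end StmtAux
/-- If `G` is a connected undirected weighted graph, `S = {s_1, …, s_k}`, and
`Wt` exceeds every distance in `G`, then the diameter of the augmented graph
`G_S` equals `2·Wt + max_{s_i,s_j ∈ S} d_G(s_i, s_j)`. -/
theorem stmt_17 {V : Type*} [Fintype V] [DecidableEq V] (k : ℕ) (hk : 2 ≤ k)
    (wG : V → V → ℕ∞) (hsym : ∀ a b : V, wG a b = wG b a)
    (s : Fin k → V) (Wt : ℕ) (hWt : 0 < Wt)
    (hdiam : ∀ a b : V, ewdist wG a b < (Wt : ℕ∞)) :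
    (⨆ p : (V ⊕ Fin k) × (V ⊕ Fin k), ewdist (wS wG s Wt) p.1 p.2) =
      2 * (Wt : ℕ∞) + ⨆ p : Fin k × Fin k, ewdist wG (s p.1) (s p.2) := by
  classical
  set D : ℕ∞ := ⨆ p : Fin k × Fin k, ewdist wG (s p.1) (s p.2) with hD
  have hfin : Nonempty (Fin k) := ⟨⟨0, by omega⟩⟩
  have hW2 : (Wt : ℕ∞) ≤ 2 * (Wt : ℕ∞) := by
    rw [two_mul]; exact le_self_add
  have hDle : ∀ i j : Fin k, ewdist wG (s i) (s j) ≤ D :=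
    fun i j => le_iSup (fun p : Fin k × Fin k => ewdist wG (s p.1) (s p.2)) (i, j)
  refine le_antisymm ?_ ?_
  · refine iSup_le fun p => ?_
    rw [StmtAux.ewdist_wS_eq]
    obtain ⟨a | i, b | j⟩ := p
    · show ewdist wG a b ≤ _
      exact le_trans (le_trans (hdiam a b).le hW2) le_self_add
    · show (Wt : ℕ∞) + ewdist wG a (s j) ≤ _
      refine le_trans ?_ (le_self_add : 2 * (Wt : ℕ∞) ≤ 2 * (Wt : ℕ∞) + D)
      rw [two_mul]
      exact add_le_add_right (hdiam a (s j)).le _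
    · show (Wt : ℕ∞) + ewdist wG (s i) b ≤ _
      refine le_trans ?_ (le_self_add : 2 * (Wt : ℕ∞) ≤ 2 * (Wt : ℕ∞) + D)
      rw [two_mul]
      exact add_le_add_right (hdiam (s i) b).le _
    · show (if i = j then 0 else 2 * (Wt : ℕ∞) + ewdist wG (s i) (s j)) ≤ _
      split
      · exact zero_le
      · exact add_le_add_right (hDle i j) _
  · obtain ⟨⟨i, j⟩, hij⟩ :=
      exists_eq_ciSup_of_finite (f := fun p : Fin k × Fin k => ewdist wG (s p.1) (s p.2))
    rw [hD, ← hij]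
    by_cases h : i = j
    · subst h
      rw [show ((i,i).1 : Fin k) = (i,i).2 from rfl, StmtAux.ewdist_self, add_zero]
      obtain ⟨j', hj'⟩ : ∃ j' : Fin k, j' ≠ i := by
        rcases Decidable.eq_or_ne i ⟨0, by omega⟩ with h0 | h0
        · exact ⟨⟨1, by omega⟩, by rw [h0]; simp [Fin.ext_iff]⟩
        · exact ⟨⟨0, by omega⟩, fun h => h0 h.symm⟩
      calc 2 * (Wt : ℕ∞) ≤ 2 * (Wt : ℕ∞) + ewdist wG (s i) (s j') := le_self_add
        _ = ewdist (wS wG s Wt) (Sum.inr i) (Sum.inr j') := by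
            rw [StmtAux.ewdist_wS_eq]
            show _ = if i = j' then 0 else _
            rw [if_neg (fun h => hj' h.symm)]
        _ ≤ _ := le_iSup (fun p : (V ⊕ Fin k) × (V ⊕ Fin k) =>
            ewdist (wS wG s Wt) p.1 p.2) (Sum.inr i, Sum.inr j')
    · calc 2 * (Wt : ℕ∞) + ewdist wG (s i) (s j)
          = ewdist (wS wG s Wt) (Sum.inr i) (Sum.inr j) := by
            rw [StmtAux.ewdist_wS_eq]
            show _ = if i = j then 0 else _
            rw [if_neg h]
        _ ≤ _ := le_iSup (fun p : (V ⊕ Fin k) × (V ⊕ Fin k) =>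
            ewdist (wS wG s Wt) p.1 p.2) (Sum.inr i, Sum.inr j)
end
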